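/- Let n ≥ 1, let U be an invertible n × n matrix over 𝔽₂ = ZMod 2 with F := U⁻¹ and F(i) := {k : F_{i,k} = 1}, and let m_U be the 2^n × 2^n permutation matrix with m_U e_f = e_{U f} for f ∈ 𝔽₂ⁿ. Let a_i := Z^{⊗i} ⊗ σ⁻ ⊗ I^{⊗(n−1−i)} be the n-qubit Jordan–Wigner annihilation operators. Then for every i ∈ {0,…,n−1}, the conjugated number operator satisfies m_U · (a_i)† a_i · m_U† = ½(I − Z_{F(i)}). -/

import Mathlib

open Matrix Finset
open scoped symmDiff

namespace FQ

/-- Pauli X. -/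
noncomputable def X : Matrix (ZMod 2) (ZMod 2) ℂ := !![0, 1; 1, 0]

/-- Pauli Y. -/
noncomputable def Y : Matrix (ZMod 2) (ZMod 2) ℂ := !![0, -Complex.I; Complex.I, 0]

/-- Pauli Z. -/
noncomputable def Z : Matrix (ZMod 2) (ZMod 2) ℂ := !![1, 0; 0, -1]

/-- Tensor product `M 0 ⊗ M 1 ⊗ ⋯ ⊗ M (n-1)` of a family of single-qubit operators, as a
`2^n × 2^n` matrix indexed by functions `Fin n → ZMod 2`
(the identification of `(ℂ²)^⊗n` with `ℂ^(2^n)`). -/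
noncomputable def tens {n : ℕ} (M : Fin n → Matrix (ZMod 2) (ZMod 2) ℂ) :
    Matrix (Fin n → ZMod 2) (Fin n → ZMod 2) ℂ :=
  Matrix.of fun f g => ∏ i, M i (f i) (g i)

/-- The lowering operator `σ⁻ = (X + iY)/2`. -/
noncomputable def σm : Matrix (ZMod 2) (ZMod 2) ℂ := !![0, 1; 0, 0]

/-- The `n`-qubit Jordan–Wigner annihilation operators: `ann n i = Z^⊗i ⊗ σ⁻ ⊗ I^⊗(n-1-i)`. -/
noncomputable def ann (n i : ℕ) : Matrix (Fin n → ZMod 2) (Fin n → ZMod 2) ℂ :=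
  tens fun j => if (j : ℕ) < i then Z else if (j : ℕ) = i then σm else 1

/-- The Pauli string `X_S`: Pauli `X` on each tensor factor in `S`, identity elsewhere. -/
noncomputable def Xstr {n : ℕ} (S : Finset (Fin n)) :
    Matrix (Fin n → ZMod 2) (Fin n → ZMod 2) ℂ :=
  tens fun j => if j ∈ S then X else 1

/-- The Pauli string `Y_S`: Pauli `Y` on each tensor factor in `S`, identity elsewhere. -/
noncomputable def Ystr {n : ℕ} (S : Finset (Fin n)) :
    Matrix (Fin n → ZMod 2) (Fin n → ZMod 2) ℂ :=
  tens fun j => if j ∈ S then Y else 1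

/-- The Pauli string `Z_S`: Pauli `Z` on each tensor factor in `S`, identity elsewhere. -/
noncomputable def Zstr {n : ℕ} (S : Finset (Fin n)) :
    Matrix (Fin n → ZMod 2) (Fin n → ZMod 2) ℂ :=
  tens fun j => if j ∈ S then Z else 1

/-- The `2^n × 2^n` permutation matrix `m_U` of the linear encoding determined by
`U ∈ GL_n(𝔽₂)`, sending the basis vector `e_f` to `e_{U f}`. -/
noncomputable def encMat {n : ℕ} (U : Matrix (Fin n) (Fin n) (ZMod 2)) :
    Matrix (Fin n → ZMod 2) (Fin n → ZMod 2) ℂ :=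
  Matrix.of fun g f => if g = U.mulVec f then 1 else 0

/-- `U(i) = {k : U_{k,i} = 1}`, the set of row indices of nonzero elements of the `i`-th
column of `U`. -/
def colSet {n : ℕ} (U : Matrix (Fin n) (Fin n) (ZMod 2)) (i : Fin n) : Finset (Fin n) :=
  Finset.univ.filter fun k => U k i = 1

/-- `F(i) = {k : F_{i,k} = 1}`, the set of column indices of nonzero elements of the `i`-th
row of `F`. -/
def rowSet {n : ℕ} (F : Matrix (Fin n) (Fin n) (ZMod 2)) (i : Fin n) : Finset (Fin n) :=
  Finset.univ.filter fun k => F i k = 1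

/-- `rowSet` with a natural-number index (junk value `∅` out of range). -/
def rowSetN {n : ℕ} (F : Matrix (Fin n) (Fin n) (ZMod 2)) (i : ℕ) : Finset (Fin n) :=
  if h : i < n then rowSet F ⟨i, h⟩ else ∅

/-- `P(i) = F(0) △ F(1) △ ⋯ △ F(i−1)`, the iterated symmetric difference of the rows of `F`. -/
def Pset {n : ℕ} (F : Matrix (Fin n) (Fin n) (ZMod 2)) : ℕ → Finset (Fin n)
  | 0 => ∅
  | i + 1 => Pset F i ∆ rowSetN F i

/-- `R(i) = P(i) △ F(i)`. -/
def Rset {n : ℕ} (F : Matrix (Fin n) (Fin n) (ZMod 2)) (i : ℕ) : Finset (Fin n) :=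
  Pset F i ∆ rowSetN F i


noncomputable def Nmat : Matrix (ZMod 2) (ZMod 2) ℂ := !![0, 0; 0, 1]

noncomputable def sgn (x : ZMod 2) : ℂ := if x = 1 then -1 else 1

lemma sum_zmod2 (f : ZMod 2 → ℂ) : ∑ x, f x = f 0 + f 1 := Fin.sum_univ_two f

lemma zmod2_cases (a : ZMod 2) : a = 0 ∨ a = 1 := by revert a; decide
lemma zmod2_facts : (0 : ZMod 2) ≠ 1 ∧ (1 : ZMod 2) ≠ 0 ∧ (1 : ZMod 2) + 1 = 0 ∧ (2 : ZMod 2) = 0 := by decide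
lemma Z_e : Z 0 0 = 1 ∧ Z 0 1 = 0 ∧ Z 1 0 = 0 ∧ Z 1 1 = -1 := ⟨rfl, rfl, rfl, rfl⟩
lemma σm_e : σm 0 0 = 0 ∧ σm 0 1 = 1 ∧ σm 1 0 = 0 ∧ σm 1 1 = 0 := ⟨rfl, rfl, rfl, rfl⟩
lemma Nmat_e : Nmat 0 0 = 0 ∧ Nmat 0 1 = 0 ∧ Nmat 1 0 = 0 ∧ Nmat 1 1 = 1 := ⟨rfl, rfl, rfl, rfl⟩

lemma ZHZ : Zᴴ * Z = 1 := by
  ext a b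
  rw [Matrix.mul_apply, sum_zmod2]
  rcases zmod2_cases a with rfl | rfl <;> rcases zmod2_cases b with rfl | rfl <;> simp [Z_e, Matrix.one_apply, zmod2_facts]

lemma sHs : σmᴴ * σm = Nmat := by
  ext a b
  rw [Matrix.mul_apply, sum_zmod2]
  rcases zmod2_cases a with rfl | rfl <;> rcases zmod2_cases b with rfl | rfl <;> simp [σm_e, Nmat_e]

lemma Nmat_diag (a : ZMod 2) : Nmat a a = if a = 1 then 1 else 0 := by
  rcases zmod2_cases a with rfl | rfl <;> simp [Nmat_e, zmod2_facts]

lemma Nmat_off (a b : ZMod 2) (h : a ≠ b) : Nmat a b = 0 := by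
  rcases zmod2_cases a with rfl | rfl <;> rcases zmod2_cases b with rfl | rfl <;> simp_all [Nmat_e]

lemma Z_diag (a : ZMod 2) : Z a a = sgn a := by
  rcases zmod2_cases a with rfl | rfl <;> simp [Z_e, sgn, zmod2_facts]

lemma Z_off (a b : ZMod 2) (h : a ≠ b) : Z a b = 0 := by
  rcases zmod2_cases a with rfl | rfl <;> rcases zmod2_cases b with rfl | rfl <;> simp_all [Z_e]

lemma sgn_add (a b : ZMod 2) : sgn (a + b) = sgn a * sgn b := by
  rcases zmod2_cases a with rfl | rfl <;> rcases zmod2_cases b with rfl | rfl <;> simp [sgn, zmod2_facts]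

lemma sgn_sum {ι : Type*} (S : Finset ι) (g : ι → ZMod 2) :
    sgn (∑ j ∈ S, g j) = ∏ j ∈ S, sgn (g j) := by
  induction S using Finset.cons_induction with
  | empty => simp [sgn]
  | cons a s ha ih => rw [Finset.sum_cons, Finset.prod_cons, sgn_add, ih]

lemma tens_mul {n : ℕ} (M N : Fin n → Matrix (ZMod 2) (ZMod 2) ℂ) :
    tens M * tens N = tens fun i => M i * N i := by
  ext f g
  simp only [tens, Matrix.mul_apply, Matrix.of_apply, ← Finset.prod_mul_distrib]
  exact (Fintype.prod_sum fun i x => M i (f i) x * N i x (g i)).symm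

lemma tens_conjTranspose {n : ℕ} (M : Fin n → Matrix (ZMod 2) (ZMod 2) ℂ) :
    (tens M)ᴴ = tens fun i => (M i)ᴴ := by
  ext f g
  simp [tens, Matrix.conjTranspose_apply, star_prod]

lemma annH_ann {n : ℕ} (i : Fin n) :
    (ann n i)ᴴ * ann n i = tens fun j => if j = i then Nmat else 1 := by
  rw [ann, tens_conjTranspose, tens_mul]
  refine congrArg tens (funext fun j => ?_)
  by_cases hj : (j : ℕ) = (i : ℕ)
  · rw [if_neg (by omega), if_pos hj, if_pos (Fin.val_injective hj), sHs]
  · by_cases hlt : (j : ℕ) < (i : ℕ)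
    · rw [if_pos hlt, if_neg (fun h => hj (congrArg Fin.val h)), ZHZ]
    · rw [if_neg hlt, if_neg hj, if_neg (fun h => hj (congrArg Fin.val h)),
        Matrix.conjTranspose_one, one_mul]

lemma tensN_apply {n : ℕ} (i : Fin n) (f g : Fin n → ZMod 2) :
    tens (fun j => if j = i then Nmat else 1) f g
      = if f = g then (if f i = 1 then 1 else 0) else 0 := by
  by_cases hfg : f = g
  · subst hfg
    rw [if_pos rfl]
    show (∏ j, (if j = i then Nmat else 1) (f j) (f j)) = _
    have h1 : ∀ j, (if j = i then Nmat else (1 : Matrix (ZMod 2) (ZMod 2) ℂ)) (f j) (f j)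
        = if j = i then Nmat (f j) (f j) else 1 := by
      intro j; split_ifs <;> simp [Matrix.one_apply_eq]
    simp only [h1]
    rw [Finset.prod_ite_eq' Finset.univ i (fun j => Nmat (f j) (f j))]
    simp [Nmat_diag]
  · rw [if_neg hfg]
    obtain ⟨j, hj⟩ := Function.ne_iff.mp hfg
    refine Finset.prod_eq_zero (Finset.mem_univ j) ?_
    show (if j = i then Nmat else (1 : Matrix (ZMod 2) (ZMod 2) ℂ)) (f j) (g j) = 0
    split_ifs with h
    · exact Nmat_off _ _ hj
    · exact Matrix.one_apply_ne hj

lemma Zstr_apply {n : ℕ} (S : Finset (Fin n)) (f g : Fin n → ZMod 2) :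
    Zstr S f g = if f = g then sgn (∑ j ∈ S, f j) else 0 := by
  by_cases hfg : f = g
  · subst hfg
    rw [if_pos rfl, sgn_sum]
    show (∏ j, (if j ∈ S then Z else 1) (f j) (f j)) = _
    have h1 : ∀ j, (if j ∈ S then Z else (1 : Matrix (ZMod 2) (ZMod 2) ℂ)) (f j) (f j)
        = if j ∈ S then sgn (f j) else 1 := by
      intro j; split_ifs <;> simp [Matrix.one_apply_eq, Z_diag]
    simp only [h1]
    rw [Finset.prod_ite_mem Finset.univ S (fun j => sgn (f j)), Finset.univ_inter]
  · rw [if_neg hfg]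
    obtain ⟨j, hj⟩ := Function.ne_iff.mp hfg
    refine Finset.prod_eq_zero (Finset.mem_univ j) ?_
    show (if j ∈ S then Z else (1 : Matrix (ZMod 2) (ZMod 2) ℂ)) (f j) (g j) = 0
    split_ifs with h
    · exact Z_off _ _ hj
    · exact Matrix.one_apply_ne hj

/-- conjugating the Jordan–Wigner number operator `a_i† a_i` by the permutation
matrix `m_U` of a linear encoding `U ∈ GL_n(𝔽₂)` gives `½(I − Z_{F(i)})` with `F = U⁻¹`. -/
theorem linear_encoding_number_operator (n : ℕ) (hn : 1 ≤ n)
    (U : Matrix (Fin n) (Fin n) (ZMod 2)) (hU : IsUnit U) :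
    ∀ i : Fin n,
      encMat U * ((ann n i)ᴴ * ann n i) * (encMat U)ᴴ =
        (1 / 2 : ℂ) • (1 - Zstr (rowSet U⁻¹ i)) := by

  have hdet : IsUnit U.det := (Matrix.isUnit_iff_isUnit_det U).mp hU
  have h1 : U * U⁻¹ = 1 := Matrix.mul_nonsing_inv U hdet
  have h2 : U⁻¹ * U = 1 := Matrix.nonsing_inv_mul U hdet
  have hUF : ∀ x, U.mulVec (U⁻¹.mulVec x) = x := fun x => by
    rw [Matrix.mulVec_mulVec, h1, Matrix.one_mulVec]
  have hFU : ∀ x, U⁻¹.mulVec (U.mulVec x) = x := fun x => by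
    rw [Matrix.mulVec_mulVec, h2, Matrix.one_mulVec]
  intro i
  ext g g'
  have hconj : (encMat U * ((ann n i)ᴴ * ann n i) * (encMat U)ᴴ) g g'
      = ((ann n i)ᴴ * ann n i) (U⁻¹.mulVec g) (U⁻¹.mulVec g') := by
    rw [Matrix.mul_apply]
    have inner : ∀ h, (encMat U * ((ann n i)ᴴ * ann n i)) g h
        = ((ann n i)ᴴ * ann n i) (U⁻¹.mulVec g) h := by
      intro h
      rw [Matrix.mul_apply]
      rw [Finset.sum_eq_single (U⁻¹.mulVec g)]
      · rw [encMat, Matrix.of_apply, if_pos (hUF g).symm, one_mul]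
      · intro f _ hf
        rw [encMat, Matrix.of_apply, if_neg, zero_mul]
        intro hc
        exact hf (by rw [hc, hFU])
      · intro hx; exact absurd (Finset.mem_univ _) hx
    simp only [inner]
    rw [Finset.sum_eq_single (U⁻¹.mulVec g')]
    · rw [Matrix.conjTranspose_apply, encMat, Matrix.of_apply, if_pos (hUF g').symm,
        star_one, mul_one]
    · intro h _ hh
      rw [Matrix.conjTranspose_apply, encMat, Matrix.of_apply, if_neg, star_zero, mul_zero]
      intro hc
      exact hh (by rw [hc, hFU])
    · intro hx; exact absurd (Finset.mem_univ _) hx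
  rw [hconj, annH_ann, tensN_apply]
  have hinj : (U⁻¹.mulVec g = U⁻¹.mulVec g') ↔ g = g' := by
    constructor
    · intro h; have := congrArg U.mulVec h; rwa [hUF, hUF] at this
    · rintro rfl; rfl
  have hsum : U⁻¹.mulVec g i = ∑ k ∈ rowSet U⁻¹ i, g k := by
    rw [rowSet, Finset.sum_filter, Matrix.mulVec, dotProduct]
    refine Finset.sum_congr rfl fun k _ => ?_
    generalize U⁻¹ i k = x
    rcases zmod2_cases x with rfl | rfl <;> simp [zmod2_facts]
  rw [Matrix.smul_apply, Matrix.sub_apply, Matrix.one_apply, Zstr_apply, smul_eq_mul, hsum]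
  by_cases hgg : g = g'
  · subst hgg
    rw [if_pos rfl, if_pos rfl, if_pos rfl]
    by_cases hs : (∑ k ∈ rowSet U⁻¹ i, g k) = 1
    · rw [if_pos hs, sgn, if_pos hs]; norm_num
    · rw [if_neg hs, sgn, if_neg hs]; norm_num
  · rw [if_neg (fun h => hgg (hinj.mp h)), if_neg hgg, if_neg hgg]
    ring


end FQ
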